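/- Let A be a set of integers, h ≥ 2, and suppose A is a Sidon set of order h−1, |a| ≤ d for all a ∈ A, and c > 2hd. Then A ∪ {−c, (h−1)c + u} is a Sidon set of order h−1 for any integer u with |u| ≤ d. -/

import Mathlib

/-- The representation function of order `h` of `A ⊆ ℤ`. -/
noncomputable def repFn (A : Set ℤ) (h : ℕ) (n : ℤ) : ℕ∞ :=
  {g : Fin h → ℤ | Monotone g ∧ (∀ i, g i ∈ A) ∧ ∑ i, g i = n}.encard

/-- Bound on the absolute value of a multiset sum. -/
lemma abs_msum_le {R : Multiset ℤ} {d : ℤ} (h : ∀ x ∈ R, |x| ≤ d) :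
    |R.sum| ≤ (Multiset.card R : ℤ) * d := by
  induction R using Multiset.induction_on with
  | empty => simp
  | cons a s ih =>
    simp only [Multiset.sum_cons, Multiset.card_cons]
    calc |a + s.sum| ≤ |a| + |s.sum| := abs_add_le _ _
      _ ≤ d + (Multiset.card s : ℤ) * d :=
        add_le_add (h a (Multiset.mem_cons_self a s))
          (ih fun x hx => h x (Multiset.mem_cons_of_mem hx))
      _ = ((Multiset.card s + 1 : ℕ) : ℤ) * d := by push_cast; ring

/-- The Sidon property in multiset form. -/
lemma multiset_sidon {A : Set ℤ} {m : ℕ} (hS : ∀ n : ℤ, repFn A m n ≤ 1)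
    {M₁ M₂ : Multiset ℤ} (h₁ : ∀ x ∈ M₁, x ∈ A) (h₂ : ∀ x ∈ M₂, x ∈ A)
    (c₁ : Multiset.card M₁ = m) (c₂ : Multiset.card M₂ = m)
    (hs : M₁.sum = M₂.sum) : M₁ = M₂ := by
  classical
  have key : ∀ M : Multiset ℤ, Multiset.card M = m →
      ∃ g : Fin m → ℤ, Monotone g ∧ (∀ i, g i ∈ M) ∧ (∑ i, g i) = M.sum ∧
        ((List.ofFn g : List ℤ) : Multiset ℤ) = M := by
    intro M hc
    have hlen : (M.sort (· ≤ ·)).length = m := by rw [Multiset.length_sort, hc]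
    subst hlen
    refine ⟨(M.sort (· ≤ ·)).get, ?_, ?_, ?_, ?_⟩
    · intro i j hij
      exact (Multiset.pairwise_sort (s := M) (r := (· ≤ ·))).rel_get_of_le hij
    · intro i
      exact (Multiset.mem_sort _).mp (List.get_mem _ i)
    · rw [← List.sum_ofFn, List.ofFn_get, ← Multiset.sum_coe, Multiset.sort_eq]
    · rw [List.ofFn_get, Multiset.sort_eq]
  obtain ⟨g₁, hg₁m, hg₁mem, hg₁s, hg₁e⟩ := key M₁ c₁
  obtain ⟨g₂, hg₂m, hg₂mem, hg₂s, hg₂e⟩ := key M₂ c₂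
  have hmem₁ : g₁ ∈ {g : Fin m → ℤ | Monotone g ∧ (∀ i, g i ∈ A) ∧ ∑ i, g i = M₁.sum} :=
    ⟨hg₁m, fun i => h₁ _ (hg₁mem i), hg₁s⟩
  have hmem₂ : g₂ ∈ {g : Fin m → ℤ | Monotone g ∧ (∀ i, g i ∈ A) ∧ ∑ i, g i = M₁.sum} :=
    ⟨hg₂m, fun i => h₂ _ (hg₂mem i), by rw [hg₂s, hs]⟩
  have := hS M₁.sum
  rw [repFn, Set.encard_le_one_iff] at this
  have hg : g₁ = g₂ := this _ _ hmem₁ hmem₂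
  rw [← hg₁e, ← hg₂e, hg]

/-- Decomposition of a multiset with entries in `A ∪ {x, y}`. -/
lemma multiset_decomp {A : Set ℤ} {x y : ℤ} (hxy : x ≠ y) (M : Multiset ℤ)
    (hM : ∀ z ∈ M, z ∈ A ∪ {x, y}) :
    ∃ R : Multiset ℤ, (∀ z ∈ R, z ∈ A) ∧
      M = Multiset.replicate (M.count x) x + Multiset.replicate (M.count y) y + R := by
  classical
  refine ⟨M.filter (fun z => ¬(z = x ∨ z = y)), ?_, ?_⟩
  · intro z hz
    rw [Multiset.mem_filter] at hz
    rcases hM z hz.1 with h | h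
    · exact h
    · simp only [Set.mem_insert_iff, Set.mem_singleton_iff] at h
      exact absurd h hz.2
  · ext a
    simp only [Multiset.count_add, Multiset.count_replicate, Multiset.count_filter]
    by_cases hax : a = x
    · subst hax
      simp [hxy, Ne.symm hxy]
    · by_cases hay : a = y
      · subst hay
        simp [hax, hxy]
      · simp [hax, hay, Ne.symm hax, Ne.symm hay]

/-- If `A` is a Sidon set of order `h−1` with `|a| ≤ d` on `A`, `|u| ≤ d` and
`c > 2hd`, then `A ∪ {−c, (h−1)c + u}` is a Sidon set of order `h−1`. -/
theorem sidon_extension (A : Set ℤ) (hA : A.Finite) (h : ℕ) (hh : 2 ≤ h)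
    (d c u : ℤ) (hd : ∀ a ∈ A, |a| ≤ d) (hu : |u| ≤ d) (hc : 2 * h * d < c)
    (hSidon : ∀ n : ℤ, repFn A (h - 1) n ≤ 1) :
    ∀ n : ℤ, repFn (A ∪ {-c, (h - 1 : ℤ) * c + u}) (h - 1) n ≤ 1 := by
  classical
  intro n
  set m : ℕ := h - 1 with hm
  set B : ℤ := ((h : ℤ) - 1) * c + u with hB
  -- basic numeric facts
  have hd0 : 0 ≤ d := le_trans (abs_nonneg u) hu
  have hh2 : (2 : ℤ) ≤ (h : ℤ) := by exact_mod_cast hh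
  have hc0 : 0 < c := lt_of_le_of_lt (mul_nonneg (by positivity) hd0) hc
  have hmcast : (m : ℤ) = (h : ℤ) - 1 := by
    rw [hm]; push_cast [Nat.cast_sub (le_trans one_le_two hh)]; ring
  have hxy : -c ≠ B := by
    intro he
    have huv : u = -(h : ℤ) * c := by rw [hB] at he; linarith
    have h1 : (h : ℤ) * c ≤ d := by
      have habs : |u| = (h : ℤ) * c := by
        rw [huv, abs_mul, abs_neg, abs_of_nonneg (by positivity : (0:ℤ) ≤ (h:ℤ)),
          abs_of_nonneg (le_of_lt hc0)]
      linarith [habs ▸ hu]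
    nlinarith
  rw [repFn, Set.encard_le_one_iff]
  rintro g₁ g₂ ⟨hm₁, hmem₁, hs₁⟩ ⟨hm₂, hmem₂, hs₂⟩
  -- multisets of values
  set M₁ : Multiset ℤ := ((List.ofFn g₁ : List ℤ) : Multiset ℤ) with hM₁
  set M₂ : Multiset ℤ := ((List.ofFn g₂ : List ℤ) : Multiset ℤ) with hM₂
  have hcard₁' : Multiset.card M₁ = m := by rw [hM₁]; simp
  have hcard₂' : Multiset.card M₂ = m := by rw [hM₂]; simp
  have hsum₁ : M₁.sum = n := by rw [hM₁, Multiset.sum_coe, List.sum_ofFn, hs₁]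
  have hsum₂ : M₂.sum = n := by rw [hM₂, Multiset.sum_coe, List.sum_ofFn, hs₂]
  have hmemM₁ : ∀ z ∈ M₁, z ∈ A ∪ {-c, B} := by
    intro z hz
    rw [hM₁, Multiset.mem_coe, List.mem_ofFn] at hz
    obtain ⟨i, rfl⟩ := hz
    exact hmem₁ i
  have hmemM₂ : ∀ z ∈ M₂, z ∈ A ∪ {-c, B} := by
    intro z hz
    rw [hM₂, Multiset.mem_coe, List.mem_ofFn] at hz
    obtain ⟨i, rfl⟩ := hz
    exact hmem₂ i
  obtain ⟨R₁, hR₁A, hdec₁⟩ := multiset_decomp hxy M₁ hmemM₁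
  obtain ⟨R₂, hR₂A, hdec₂⟩ := multiset_decomp hxy M₂ hmemM₂
  set p₁ := M₁.count (-c) with hp₁; set q₁ := M₁.count B with hq₁
  set p₂ := M₂.count (-c) with hp₂; set q₂ := M₂.count B with hq₂
  -- cards
  have hcard₁ : p₁ + q₁ + Multiset.card R₁ = m := by
    have := hcard₁'; rw [hdec₁] at this; simpa using this
  have hcard₂ : p₂ + q₂ + Multiset.card R₂ = m := by
    have := hcard₂'; rw [hdec₂] at this; simpa using this
  -- sums
  have hsumd₁ : n = -(p₁ : ℤ) * c + (q₁ : ℤ) * B + R₁.sum := by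
    rw [← hsum₁, hdec₁]
    simp only [Multiset.sum_add, Multiset.sum_replicate, smul_eq_mul]
    ring
  have hsumd₂ : n = -(p₂ : ℤ) * c + (q₂ : ℤ) * B + R₂.sum := by
    rw [← hsum₂, hdec₂]
    simp only [Multiset.sum_add, Multiset.sum_replicate, smul_eq_mul]
    ring
  -- remainder bounds
  have hRb₁ : |R₁.sum| ≤ (Multiset.card R₁ : ℤ) * d :=
    abs_msum_le (fun z hz => hd z (hR₁A z hz))
  have hRb₂ : |R₂.sum| ≤ (Multiset.card R₂ : ℤ) * d :=
    abs_msum_le (fun z hz => hd z (hR₂A z hz))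
  -- rewrite: n = k*c + r with |r| small
  have hrw₁ : n = ((q₁ : ℤ) * ((h:ℤ) - 1) - p₁) * c + ((q₁ : ℤ) * u + R₁.sum) := by
    rw [hsumd₁, hB]; ring
  have hrw₂ : n = ((q₂ : ℤ) * ((h:ℤ) - 1) - p₂) * c + ((q₂ : ℤ) * u + R₂.sum) := by
    rw [hsumd₂, hB]; ring
  have hq₁m : (q₁ : ℤ) + (Multiset.card R₁ : ℤ) ≤ (m : ℤ) := by
    have : q₁ + Multiset.card R₁ ≤ m := by omega
    exact_mod_cast this
  have hq₂m : (q₂ : ℤ) + (Multiset.card R₂ : ℤ) ≤ (m : ℤ) := by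
    have : q₂ + Multiset.card R₂ ≤ m := by omega
    exact_mod_cast this
  have hr₁ : |(q₁ : ℤ) * u + R₁.sum| ≤ (m : ℤ) * d := by
    calc |(q₁ : ℤ) * u + R₁.sum| ≤ |(q₁ : ℤ) * u| + |R₁.sum| := abs_add_le _ _
      _ ≤ (q₁ : ℤ) * d + (Multiset.card R₁ : ℤ) * d := by
          refine add_le_add ?_ hRb₁
          rw [abs_mul, abs_of_nonneg (by positivity : (0:ℤ) ≤ (q₁:ℤ))]
          exact mul_le_mul_of_nonneg_left hu (by positivity)
      _ = ((q₁ : ℤ) + (Multiset.card R₁ : ℤ)) * d := by ring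
      _ ≤ (m : ℤ) * d := mul_le_mul_of_nonneg_right hq₁m hd0
  have hr₂ : |(q₂ : ℤ) * u + R₂.sum| ≤ (m : ℤ) * d := by
    calc |(q₂ : ℤ) * u + R₂.sum| ≤ |(q₂ : ℤ) * u| + |R₂.sum| := abs_add_le _ _
      _ ≤ (q₂ : ℤ) * d + (Multiset.card R₂ : ℤ) * d := by
          refine add_le_add ?_ hRb₂
          rw [abs_mul, abs_of_nonneg (by positivity : (0:ℤ) ≤ (q₂:ℤ))]
          exact mul_le_mul_of_nonneg_left hu (by positivity)
      _ = ((q₂ : ℤ) + (Multiset.card R₂ : ℤ)) * d := by ring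
      _ ≤ (m : ℤ) * d := mul_le_mul_of_nonneg_right hq₂m hd0
  -- k₁ = k₂
  have hkeq : (q₁ : ℤ) * ((h:ℤ) - 1) - p₁ = (q₂ : ℤ) * ((h:ℤ) - 1) - p₂ := by
    by_contra hne
    have hdiff : (((q₁ : ℤ) * ((h:ℤ) - 1) - p₁) - ((q₂ : ℤ) * ((h:ℤ) - 1) - p₂)) * c
        = ((q₂ : ℤ) * u + R₂.sum) - ((q₁ : ℤ) * u + R₁.sum) := by
      linear_combination hrw₁.symm.trans hrw₂
    have h1 : (1 : ℤ) ≤ |((q₁ : ℤ) * ((h:ℤ) - 1) - p₁) - ((q₂ : ℤ) * ((h:ℤ) - 1) - p₂)| := by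
      rcases lt_or_gt_of_ne (sub_ne_zero_of_ne hne) with hlt | hgt
      · rw [abs_of_neg hlt]; omega
      · rw [abs_of_pos hgt]; omega
    have habs : |(((q₁ : ℤ) * ((h:ℤ) - 1) - p₁) - ((q₂ : ℤ) * ((h:ℤ) - 1) - p₂)) * c| < c := by
      rw [hdiff]
      calc |(q₂ : ℤ) * u + R₂.sum - ((q₁ : ℤ) * u + R₁.sum)|
          ≤ |(q₂ : ℤ) * u + R₂.sum| + |(q₁ : ℤ) * u + R₁.sum| := abs_sub _ _
        _ ≤ (m : ℤ) * d + (m : ℤ) * d := add_le_add hr₂ hr₁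
        _ < c := by
            rw [hmcast]
            have he : ((h:ℤ)-1)*d + ((h:ℤ)-1)*d = 2*(h:ℤ)*d - 2*d := by ring
            linarith
    rw [abs_mul, abs_of_pos hc0] at habs
    have := mul_le_mul_of_nonneg_right h1 (le_of_lt hc0)
    linarith
  -- p₁ = p₂ and q₁ = q₂
  have hpq₁ : (p₁ : ℤ) + q₁ ≤ (h : ℤ) - 1 := by
    rw [← hmcast]
    have : p₁ + q₁ ≤ m := by omega
    exact_mod_cast this
  have hpq₂ : (p₂ : ℤ) + q₂ ≤ (h : ℤ) - 1 := by
    rw [← hmcast]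
    have : p₂ + q₂ ≤ m := by omega
    exact_mod_cast this
  have hqeq : (q₁ : ℤ) = q₂ := by
    by_contra hne
    have hp1 : (0:ℤ) ≤ (p₁ : ℤ) := Int.natCast_nonneg p₁
    have hp2 : (0:ℤ) ≤ (p₂ : ℤ) := Int.natCast_nonneg p₂
    have hq1 : (0:ℤ) ≤ (q₁ : ℤ) := Int.natCast_nonneg q₁
    have hq2 : (0:ℤ) ≤ (q₂ : ℤ) := Int.natCast_nonneg q₂
    rcases lt_or_gt_of_ne hne with hlt | hgt
    · have h1 : (q₁ : ℤ) + 1 ≤ q₂ := by exact_mod_cast Int.add_one_le_iff.mpr hlt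
      have hX : (0:ℤ) ≤ ((q₂:ℤ) - q₁ - 1) * ((h:ℤ) - 2) :=
        mul_nonneg (by linarith) (by linarith)
      have hXe : ((q₂:ℤ) - q₁ - 1) * ((h:ℤ) - 2)
          = ((q₂:ℤ) * ((h:ℤ) - 1) - (q₁:ℤ) * ((h:ℤ) - 1))
            - ((q₂:ℤ) - (q₁:ℤ)) - ((h:ℤ) - 2) := by ring
      linarith
    · have h1 : (q₂ : ℤ) + 1 ≤ q₁ := by exact_mod_cast Int.add_one_le_iff.mpr hgt
      have hX : (0:ℤ) ≤ ((q₁:ℤ) - q₂ - 1) * ((h:ℤ) - 2) :=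
        mul_nonneg (by linarith) (by linarith)
      have hXe : ((q₁:ℤ) - q₂ - 1) * ((h:ℤ) - 2)
          = ((q₁:ℤ) * ((h:ℤ) - 1) - (q₂:ℤ) * ((h:ℤ) - 1))
            - ((q₁:ℤ) - (q₂:ℤ)) - ((h:ℤ) - 2) := by ring
      linarith
  have hpeq : (p₁ : ℤ) = p₂ := by
    have := hkeq; rw [hqeq] at this; linarith
  have hqeqn : q₁ = q₂ := by exact_mod_cast hqeq
  have hpeqn : p₁ = p₂ := by exact_mod_cast hpeq
  -- sums of remainders equal
  have hRsum : R₁.sum = R₂.sum := by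
    have := hsumd₁.symm.trans hsumd₂
    rw [hpeq, hqeq] at this
    linarith
  have hRcard : Multiset.card R₁ = Multiset.card R₂ := by omega
  -- R₁ = R₂
  have hReq : R₁ = R₂ := by
    rcases Nat.eq_zero_or_pos (Multiset.card R₁) with h0 | hpos
    · have h0' : Multiset.card R₂ = 0 := by omega
      rw [Multiset.card_eq_zero] at h0 h0'
      rw [h0, h0']
    · obtain ⟨a₀, ha₀⟩ := Multiset.card_pos_iff_exists_mem.mp hpos
      have ha₀A : a₀ ∈ A := hR₁A a₀ ha₀
      have key := multiset_sidon hSidon (M₁ := R₁ + Multiset.replicate (p₁ + q₁) a₀)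
        (M₂ := R₂ + Multiset.replicate (p₁ + q₁) a₀) ?_ ?_ ?_ ?_ ?_
      · exact add_right_cancel key
      · intro z hz
        rcases Multiset.mem_add.mp hz with hz | hz
        · exact hR₁A z hz
        · rw [Multiset.eq_of_mem_replicate hz]; exact ha₀A
      · intro z hz
        rcases Multiset.mem_add.mp hz with hz | hz
        · exact hR₂A z hz
        · rw [Multiset.eq_of_mem_replicate hz]; exact ha₀A
      · simp only [Multiset.card_add, Multiset.card_replicate]
        omega
      · simp only [Multiset.card_add, Multiset.card_replicate]
        omega
      · simp only [Multiset.sum_add, hRsum]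
  -- M₁ = M₂
  have hMeq : M₁ = M₂ := by
    rw [hdec₁, hdec₂, hpeqn, hqeqn, hReq]
  -- conclude g₁ = g₂
  rw [hM₁, hM₂, Multiset.coe_eq_coe] at hMeq
  have hsort₁ : (List.ofFn g₁).Pairwise (· ≤ ·) := List.pairwise_ofFn.mpr (fun i j hij => hm₁ hij.le)
  have hsort₂ : (List.ofFn g₂).Pairwise (· ≤ ·) := List.pairwise_ofFn.mpr (fun i j hij => hm₂ hij.le)
  exact List.ofFn_injective (List.Perm.eq_of_pairwise' hsort₁ hsort₂ hMeq)
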